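/- Let α > 0, let σ > 0 with σ ≠ 1, let K > 0 and C ∈ ℝ, and let q > 0. Then the function u defined by u(q) = (Kσ/(σ−1))·((1+ασq)^{1−1/σ}/q)·[q − ((σ−1)/(ασ²))·∫₀¹ (1−t)^{1/σ−1}·(1+t/(ασq))^{−1} dt] + C is differentiable at q with derivative u′(q) = K·(1+ασq)^{1−1/σ}/q. (This is the integral, analytically continued, representation of the CREMR utility for σ > 0, valid for all q > 0.) -/

import Mathlib

open MeasureTheory intervalIntegral Real Filter Set Topology

/-- Substitution identity for the CREMR integral. -/
lemma cremr_subst (a σ x : ℝ) (ha : 0 < a) (hx : 0 < x) :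
    (∫ t in (0:ℝ)..1, (1 - t) ^ (1/σ - 1) * (1 + t / (a * x))⁻¹)
      = a * x * (1 + a * x) ^ (1/σ - 1) *
        ∫ v in (0:ℝ)..(1 + a * x)⁻¹, v ^ (1/σ - 1) * (1 - v)⁻¹ := by
  set r : ℝ := 1/σ - 1 with hr
  set c : ℝ := 1 + a * x with hcdef
  have hax : 0 < a * x := by positivity
  have hc : 0 < c := by positivity
  set g2 : ℝ → ℝ := fun s => s ^ r * (a * x * (a * x + 1 - s)⁻¹) with hg2
  have step1 : (∫ t in (0:ℝ)..1, (1 - t) ^ r * (1 + t / (a * x))⁻¹)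
      = ∫ t in (0:ℝ)..1, g2 (1 - t) := by
    congr 1; funext t
    have h1 : (1 + t / (a * x))⁻¹ = a * x * (a * x + t)⁻¹ := by
      rw [show 1 + t / (a * x) = (a * x + t) / (a * x) by field_simp, inv_div,
        div_eq_mul_inv]
    rw [h1, hg2]
    ring_nf
  have step2 : (∫ t in (0:ℝ)..1, g2 (1 - t)) = ∫ s in (0:ℝ)..1, g2 s := by
    simpa using intervalIntegral.integral_comp_sub_left g2 1
  have step3 : (∫ s in (0:ℝ)..1, g2 s) = c • ∫ v in (0:ℝ)..c⁻¹, g2 (c * v) := by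
    rw [intervalIntegral.smul_integral_comp_mul_left g2 c, mul_zero,
      mul_inv_cancel₀ (ne_of_gt hc)]
  have step4 : (∫ v in (0:ℝ)..c⁻¹, g2 (c * v))
      = ∫ v in (0:ℝ)..c⁻¹, (c ^ r * (a * x) * c⁻¹) * (v ^ r * (1 - v)⁻¹) := by
    apply intervalIntegral.integral_congr
    intro v hv
    rw [Set.uIcc_of_le (by positivity : (0:ℝ) ≤ c⁻¹)] at hv
    have hv0 : 0 ≤ v := hv.1
    rw [hg2]
    simp only
    rw [Real.mul_rpow hc.le hv0,
      show a * x + 1 - c * v = c * (1 - v) by rw [hcdef]; ring, mul_inv]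
    ring
  rw [step1, step2, step3, step4, intervalIntegral.integral_const_mul, smul_eq_mul]
  have hcc : c * c⁻¹ = 1 := mul_inv_cancel₀ (ne_of_gt hc)
  linear_combination (c ^ r * (a * x) * ∫ v in (0:ℝ)..c⁻¹, v ^ r * (1 - v)⁻¹) * hcc

/-- Derivative of the closed-ish form. -/
lemma cremr_aux_deriv (a σ K C q : ℝ) (ha : 0 < a) (hσ : 0 < σ) (hσ1 : σ ≠ 1)
    (hq : 0 < q) :
    HasDerivAt (fun x : ℝ =>
        K * σ / (σ - 1) * (1 + a * x) ^ (1 - 1/σ)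
          - K * (∫ v in (0:ℝ)..(1 + a * x)⁻¹, v ^ (1/σ - 1) * (1 - v)⁻¹) + C)
      (K * (1 + a * q) ^ (1 - 1/σ) / q) q := by
  set r : ℝ := 1/σ - 1 with hr
  have hr1 : -1 < r := by
    rw [hr]
    have : 0 < 1/σ := by positivity
    linarith
  have hc : 0 < 1 + a * q := by positivity
  set w : ℝ := (1 + a * q)⁻¹ with hwdef
  have hw0 : 0 < w := by positivity
  have hw1 : w < 1 := by
    rw [hwdef, inv_lt_one_iff₀]
    right; nlinarith
  set g : ℝ → ℝ := fun v => v ^ r * (1 - v)⁻¹ with hg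
  -- FTC at the right endpoint
  have hgcontOn : ContinuousOn g (Set.Ioo (0:ℝ) 1) := by
    apply ContinuousOn.mul
    · exact fun v hv => (Real.continuousAt_rpow_const v r
        (Or.inl (ne_of_gt hv.1))).continuousWithinAt
    · apply ContinuousOn.inv₀
      · exact (continuous_const.sub continuous_id).continuousOn
      · intro v hv; exact sub_ne_zero.mpr (ne_of_gt hv.2)
  have hwmem : w ∈ Set.Ioo (0:ℝ) 1 := ⟨hw0, hw1⟩
  have hint : IntervalIntegrable g volume 0 w := by
    apply (intervalIntegral.intervalIntegrable_rpow' hr1).mul_continuousOn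
    apply ContinuousOn.inv₀
    · exact (continuous_const.sub continuous_id).continuousOn
    · intro v hv
      rw [Set.uIcc_of_le hw0.le] at hv
      exact sub_ne_zero.mpr (ne_of_gt (lt_of_le_of_lt hv.2 hw1))
  have hmeas : StronglyMeasurableAtFilter g (𝓝 w) volume :=
    hgcontOn.stronglyMeasurableAtFilter isOpen_Ioo w hwmem
  have hcont : ContinuousAt g w :=
    hgcontOn.continuousAt (isOpen_Ioo.mem_nhds hwmem)
  have hH : HasDerivAt (fun y => ∫ v in (0:ℝ)..y, g v) (g w) w :=
    intervalIntegral.integral_hasDerivAt_right hint hmeas hcont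
  have hlin : HasDerivAt (fun x : ℝ => 1 + a * x) a q := by
    simpa using ((hasDerivAt_id q).const_mul a).const_add 1
  have hw' : HasDerivAt (fun x : ℝ => (1 + a * x)⁻¹)
      (-a / (1 + a * q) ^ 2) q := hlin.inv (ne_of_gt hc)
  have hG : HasDerivAt (fun x : ℝ => ∫ v in (0:ℝ)..(1 + a * x)⁻¹, g v)
      (g w * (-a / (1 + a * q) ^ 2)) q := by
    exact HasDerivAt.comp q hH hw'
  have hP : HasDerivAt (fun x : ℝ => (1 + a * x) ^ (1 - 1/σ))
      (a * (1 - 1/σ) * (1 + a * q) ^ (1 - 1/σ - 1)) q :=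
    hlin.rpow_const (Or.inl (ne_of_gt hc))
  have hder := ((hP.const_mul (K * σ / (σ - 1))).sub (hG.const_mul K)).add_const C
  refine hder.congr_deriv ?_; symm
  -- now the value computation
  have hE : (1 + a * q) ^ (1 - 1/σ - 1) = (1 + a * q) ^ (1 - 1/σ) * (1 + a * q)⁻¹ := by
    rw [show (1 - 1/σ - 1 : ℝ) = (1 - 1/σ) + (-1) by ring, Real.rpow_add hc,
      Real.rpow_neg_one]
  have hwr : w ^ r = (1 + a * q) ^ (1 - 1/σ) := by
    rw [hwdef, Real.inv_rpow hc.le, ← Real.rpow_neg hc.le,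
      show -r = 1 - 1/σ by rw [hr]; ring]
  have h1w : (1 - w)⁻¹ = (1 + a * q) / (a * q) := by
    rw [hwdef]
    rw [show (1 : ℝ) - (1 + a * q)⁻¹ = (a * q) / (1 + a * q) by
      field_simp; ring, inv_div]
  rw [hg]
  simp only
  rw [hwr, h1w, hE]
  have hq0 : q ≠ 0 := ne_of_gt hq
  have ha0 : a ≠ 0 := ne_of_gt ha
  have hσ0 : σ ≠ 0 := ne_of_gt hσ
  have hσm : σ - 1 ≠ 0 := sub_ne_zero.mpr hσ1
  have hc0 : (1 + a * q) ≠ 0 := ne_of_gt hc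
  field_simp
  ring

/-- The integral (analytically continued) representation of the
CREMR utility for `σ > 0` has marginal utility `K·(1+ασq)^(1−1/σ)/q` at every
`q > 0`. -/
theorem cremr_utility_integral_hasDerivAt
    (α σ K C q : ℝ) (hα : 0 < α) (hσ : 0 < σ) (hσ1 : σ ≠ 1)
    (hK : 0 < K) (hq : 0 < q) :
    HasDerivAt (fun x : ℝ =>
        (K * σ / (σ - 1)) * ((1 + α * σ * x) ^ (1 - 1/σ) / x) *
          (x - ((σ - 1) / (α * σ ^ 2)) *
            ∫ t in (0:ℝ)..1, (1 - t) ^ (1/σ - 1) * (1 + t / (α * σ * x))⁻¹) + C)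
      (K * (1 + α * σ * q) ^ (1 - 1/σ) / q) q := by
  have ha : 0 < α * σ := by positivity
  have hder := cremr_aux_deriv (α * σ) σ K C q ha hσ hσ1 hq
  apply hder.congr_of_eventuallyEq
  filter_upwards [eventually_gt_nhds hq] with x hx
  have hcx : 0 < 1 + α * σ * x := by positivity
  rw [cremr_subst (α * σ) σ x ha hx]
  have key : (1 + α * σ * x) ^ (1 - 1/σ) * (1 + α * σ * x) ^ (1/σ - 1) = 1 := by
    rw [← Real.rpow_add hcx, show (1 - 1/σ) + (1/σ - 1) = 0 by ring, Real.rpow_zero]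
  set A : ℝ := (1 + α * σ * x) ^ (1 - 1/σ) with hA
  set B : ℝ := (1 + α * σ * x) ^ (1/σ - 1) with hB
  have hA0 : 0 < A := Real.rpow_pos_of_pos hcx _
  have hBA : B = A⁻¹ := eq_inv_of_mul_eq_one_right key
  rw [hBA]
  have hx0 : x ≠ 0 := ne_of_gt hx
  have hσ0 : σ ≠ 0 := ne_of_gt hσ
  have hσm : σ - 1 ≠ 0 := sub_ne_zero.mpr hσ1
  have hα0 : α ≠ 0 := ne_of_gt hα
  field_simp
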